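/- Let G be a full DAG (every inner vertex has in-degree 2 and out-degree 2) with an ample framing F. Then every exceptional route R either passes through every inner vertex it contains using the edges that are smallest in the framing's linear orders, or passes through every inner vertex it contains using the edges that are largest in the framing's linear orders. -/

import Mathlib

/-- A finite directed acyclic multigraph. -/
structure DAG where
  V : Type
  E : Type
  [fintypeV : Fintype V]
  [fintypeE : Fintype E]
  [decEqV : DecidableEq V]
  [decEqE : DecidableEq E]
  src : E → V
  tgt : E → V
  acyclic : ∀ v : V,
    ¬ Relation.TransGen (fun a b : V => ∃ e : E, src e = a ∧ tgt e = b) v v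

attribute [instance] DAG.fintypeV DAG.fintypeE DAG.decEqV DAG.decEqE

namespace DAG

variable (G : DAG)

/-- A vertex with no incoming edges. -/
def IsSource (v : G.V) : Prop := ∀ e : G.E, G.tgt e ≠ v

/-- A vertex with no outgoing edges. -/
def IsSink (v : G.V) : Prop := ∀ e : G.E, G.src e ≠ v

/-- An inner vertex is neither a source nor a sink. -/
def IsInner (v : G.V) : Prop := ¬ G.IsSource v ∧ ¬ G.IsSink v

instance : DecidablePred G.IsSource := fun v =>
  decidable_of_iff (∀ e : G.E, G.tgt e ≠ v) Iff.rfl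

instance : DecidablePred G.IsSink := fun v =>
  decidable_of_iff (∀ e : G.E, G.src e ≠ v) Iff.rfl

instance : DecidablePred G.IsInner := fun v =>
  decidable_of_iff (¬ G.IsSource v ∧ ¬ G.IsSink v) Iff.rfl

/-- In-degree: the number of edges with target `v`. -/
def indeg (v : G.V) : ℕ := Fintype.card {e : G.E // G.tgt e = v}

/-- Out-degree: the number of edges with source `v`. -/
def outdeg (v : G.V) : ℕ := Fintype.card {e : G.E // G.src e = v}

/-- A DAG is full if every inner vertex has in-degree 2 and out-degree 2. -/
def Full : Prop := ∀ v : G.V, G.IsInner v → G.indeg v = 2 ∧ G.outdeg v = 2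

/-- A route: a maximal directed path, i.e. a nonempty list of consecutive edges
starting at a source and ending at a sink. -/
structure Route where
  edges : List G.E
  ne : edges ≠ []
  chain : edges.Chain' (fun e f => G.tgt e = G.src f)
  source_start : G.IsSource (G.src (edges.head ne))
  sink_end : G.IsSink (G.tgt (edges.getLast ne))

/-- A route visits a vertex if the vertex is an endpoint of one of its edges. -/
def Route.visits (R : G.Route) (v : G.V) : Prop :=
  ∃ e ∈ R.edges, G.src e = v ∨ G.tgt e = v

/-- A framing: a linear order on the incoming edges and a linear order on the
outgoing edges of every inner vertex. -/
structure Framing where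
  inlt : G.E → G.E → Prop
  outlt : G.E → G.E → Prop
  inlt_tgt : ∀ {e f}, inlt e f → G.tgt e = G.tgt f
  inlt_inner : ∀ {e f}, inlt e f → G.IsInner (G.tgt e)
  inlt_irrefl : ∀ e, ¬ inlt e e
  inlt_trans : ∀ {e f g}, inlt e f → inlt f g → inlt e g
  inlt_total : ∀ e f, G.tgt e = G.tgt f → G.IsInner (G.tgt e) → e ≠ f →
    inlt e f ∨ inlt f e
  outlt_src : ∀ {e f}, outlt e f → G.src e = G.src f
  outlt_inner : ∀ {e f}, outlt e f → G.IsInner (G.src e)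
  outlt_irrefl : ∀ e, ¬ outlt e e
  outlt_trans : ∀ {e f g}, outlt e f → outlt f g → outlt e g
  outlt_total : ∀ e f, G.src e = G.src f → G.IsInner (G.src e) → e ≠ f →
    outlt e f ∨ outlt f e

/-- The induced order on paths ending at a common vertex: compare the two edges
just before the longest common suffix. -/
def inPathLt (F : G.Framing) (P Q : List G.E) : Prop :=
  ∃ (p q s : List G.E) (e f : G.E), e ≠ f ∧
    P = p ++ e :: s ∧ Q = q ++ f :: s ∧ F.inlt e f

/-- The induced order on paths starting at a common vertex: compare the two edges
just after the longest common prefix. -/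
def outPathLt (F : G.Framing) (P Q : List G.E) : Prop :=
  ∃ (s p q : List G.E) (e f : G.E), e ≠ f ∧
    P = s ++ e :: p ∧ Q = s ++ f :: q ∧ F.outlt e f

/-- Routes `P` and `Q` are in conflict (with `P` playing the first role) if they
pass through a common inner vertex `v` with `Pv ≺ Qv` in the in-order and
`vQ ≺ vP` in the out-order. -/
def Conflict (F : G.Framing) (P Q : G.Route) : Prop :=
  ∃ (v : G.V) (a b c d : List G.E) (ea ec : G.E),
    P.edges = a ++ [ea] ++ b ∧ Q.edges = c ++ [ec] ++ d ∧
    G.tgt ea = v ∧ G.tgt ec = v ∧ b ≠ [] ∧ d ≠ [] ∧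
    G.inPathLt F (a ++ [ea]) (c ++ [ec]) ∧ G.outPathLt F d b

/-- Two routes are coherent if they are not in conflict at any common inner
vertex (in either order). -/
def CoherentPair (F : G.Framing) (P Q : G.Route) : Prop :=
  ¬ G.Conflict F P Q ∧ ¬ G.Conflict F Q P

/-- A route is exceptional if it is coherent with every route. -/
def Exceptional (F : G.Framing) (R : G.Route) : Prop :=
  ∀ S : G.Route, G.CoherentPair F R S

/-- An edge is idle if it is the unique incoming or the unique outgoing edge of
an inner vertex. -/
def Idle (e : G.E) : Prop :=
  (G.IsInner (G.tgt e) ∧ ∀ f : G.E, G.tgt f = G.tgt e → f = e) ∨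
  (G.IsInner (G.src e) ∧ ∀ f : G.E, G.src f = G.src e → f = e)

/-- A framing is ample if every non-idle edge lies on an exceptional route. -/
def Ample (F : G.Framing) : Prop :=
  ∀ e : G.E, ¬ G.Idle e → ∃ R : G.Route, G.Exceptional F R ∧ e ∈ R.edges

/-- `e` is smallest among the edges entering its target. -/
def MinIn (F : G.Framing) (e : G.E) : Prop :=
  ∀ f : G.E, G.tgt f = G.tgt e → f ≠ e → F.inlt e f

/-- `e` is largest among the edges entering its target. -/
def MaxIn (F : G.Framing) (e : G.E) : Prop :=
  ∀ f : G.E, G.tgt f = G.tgt e → f ≠ e → F.inlt f e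

/-- `e` is smallest among the edges leaving its source. -/
def MinOut (F : G.Framing) (e : G.E) : Prop :=
  ∀ f : G.E, G.src f = G.src e → f ≠ e → F.outlt e f

/-- `e` is largest among the edges leaving its source. -/
def MaxOut (F : G.Framing) (e : G.E) : Prop :=
  ∀ f : G.E, G.src f = G.src e → f ≠ e → F.outlt f e

/-- The characteristic vector of a route. -/
noncomputable def charVec (R : G.Route) : G.E → ℝ :=
  fun e => if e ∈ R.edges then 1 else 0

end DAG
namespace DAG

variable (G : DAG)

/-- The step relation of the DAG. -/
def Step : G.V → G.V → Prop := fun a b => ∃ e : G.E, G.src e = a ∧ G.tgt e = b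

lemma wf_fwd : WellFounded (fun b a : G.V => ∃ e : G.E, G.src e = a ∧ G.tgt e = b) := by
  have h1 : IsTrans G.V (fun b a => Relation.TransGen G.Step a b) :=
    ⟨fun x y z h1 h2 => Relation.TransGen.trans h2 h1⟩
  have h2 : IsIrrefl G.V (fun b a => Relation.TransGen G.Step a b) :=
    ⟨fun x h => G.acyclic x h⟩
  have hwf : WellFounded (fun b a : G.V => Relation.TransGen G.Step a b) :=
    Finite.wellFounded_of_trans_of_irrefl _
  exact Subrelation.wf (fun {a b} h => Relation.TransGen.single h) hwf

lemma wf_bwd : WellFounded (fun b a : G.V => ∃ e : G.E, G.tgt e = a ∧ G.src e = b) := by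
  have h1 : IsTrans G.V (fun a b => Relation.TransGen G.Step a b) :=
    ⟨fun x y z h1 h2 => Relation.TransGen.trans h1 h2⟩
  have h2 : IsIrrefl G.V (fun a b => Relation.TransGen G.Step a b) :=
    ⟨fun x h => G.acyclic x h⟩
  have hwf : WellFounded (fun a b : G.V => Relation.TransGen G.Step a b) :=
    Finite.wellFounded_of_trans_of_irrefl _
  exact Subrelation.wf
    (fun {a b} h => Relation.TransGen.single ⟨h.choose, h.choose_spec.2, h.choose_spec.1⟩) hwf

/-- Forward maximal path from a vertex. -/
noncomputable def fwd : G.V → List G.E :=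
  G.wf_fwd.fix fun v ih =>
    if h : ∃ e : G.E, G.src e = v then
      h.choose :: ih (G.tgt h.choose) ⟨h.choose, h.choose_spec, rfl⟩
    else []

lemma fwd_eq (v : G.V) : G.fwd v =
    if h : ∃ e : G.E, G.src e = v then h.choose :: G.fwd (G.tgt h.choose) else [] := by
  rw [fwd, WellFounded.fix_eq]

lemma fwd_ok (v : G.V) :
    (G.fwd v).Chain' (fun e f => G.tgt e = G.src f) ∧
    (∀ e ∈ (G.fwd v).head?, G.src e = v) ∧
    (∀ e ∈ (G.fwd v).getLast?, G.IsSink (G.tgt e)) ∧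
    (G.fwd v = [] → G.IsSink v) := by
  induction v using G.wf_fwd.induction with
  | _ v IH =>
  rw [G.fwd_eq v]
  by_cases h : ∃ e : G.E, G.src e = v
  · rw [dif_pos h]
    obtain ⟨hch, hhd, hlast, hnil⟩ := IH (G.tgt h.choose) ⟨h.choose, h.choose_spec, rfl⟩
    refine ⟨?_, ?_, ?_, by simp⟩
    · refine List.isChain_cons.mpr ⟨?_, hch⟩
      intro f hf
      exact (hhd f hf).symm
    · intro e he
      rw [List.head?_cons, Option.mem_some_iff] at he
      subst he
      exact h.choose_spec
    · intro e he
      rcases hrest : G.fwd (G.tgt h.choose) with _ | ⟨c, rest⟩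
      · rw [hrest] at he
        simp only [List.getLast?_singleton, Option.mem_some_iff] at he
        subst he
        exact hnil hrest
      · rw [hrest, List.getLast?_cons_cons] at he
        rw [hrest] at hlast
        exact hlast e he
  · rw [dif_neg h]
    push_neg at h
    exact ⟨List.isChain_nil, by simp, by simp, fun _ => h⟩

/-- Backward maximal path to a vertex. -/
noncomputable def bwd : G.V → List G.E :=
  G.wf_bwd.fix fun v ih =>
    if h : ∃ e : G.E, G.tgt e = v then
      ih (G.src h.choose) ⟨h.choose, h.choose_spec, rfl⟩ ++ [h.choose]
    else []

lemma bwd_eq (v : G.V) : G.bwd v =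
    if h : ∃ e : G.E, G.tgt e = v then G.bwd (G.src h.choose) ++ [h.choose] else [] := by
  rw [bwd, WellFounded.fix_eq]

lemma bwd_ok (v : G.V) :
    (G.bwd v).Chain' (fun e f => G.tgt e = G.src f) ∧
    (∀ e ∈ (G.bwd v).getLast?, G.tgt e = v) ∧
    (∀ e ∈ (G.bwd v).head?, G.IsSource (G.src e)) ∧
    (G.bwd v = [] → G.IsSource v) := by
  induction v using G.wf_bwd.induction with
  | _ v IH =>
  rw [G.bwd_eq v]
  by_cases h : ∃ e : G.E, G.tgt e = v
  · rw [dif_pos h]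
    obtain ⟨hch, hlast, hhd, hnil⟩ := IH (G.src h.choose) ⟨h.choose, h.choose_spec, rfl⟩
    refine ⟨?_, ?_, ?_, by simp⟩
    · refine List.isChain_append.mpr ⟨hch, List.isChain_singleton _, ?_⟩
      intro x hx y hy
      rw [List.head?_cons, Option.mem_some_iff] at hy
      subst hy
      exact hlast x hx
    · intro e he
      rw [List.getLast?_concat, Option.mem_some_iff] at he
      subst he
      exact h.choose_spec
    · intro e he
      rcases hrest : G.bwd (G.src h.choose) with _ | ⟨c, rest⟩
      · rw [hrest, List.nil_append, List.head?_cons, Option.mem_some_iff] at he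
        subst he
        exact hnil hrest
      · rw [hrest, List.cons_append, List.head?_cons, Option.mem_some_iff] at he
        subst he
        rw [hrest] at hhd
        exact hhd c (by simp)
  · rw [dif_neg h]
    push_neg at h
    exact ⟨List.isChain_nil, by simp, by simp, fun _ => h⟩

end DAG
namespace DAG

variable (G : DAG)

/-- Extend a nonempty chain of edges to a maximal route. -/
noncomputable def routeExtend (l : List G.E) (hne : l ≠ [])
    (hch : l.Chain' (fun e f => G.tgt e = G.src f)) : G.Route where
  edges := G.bwd (G.src (l.head hne)) ++ (l ++ G.fwd (G.tgt (l.getLast hne)))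
  ne := by
    simp only [ne_eq, List.append_eq_nil_iff]
    rintro ⟨-, h, -⟩
    exact hne h
  chain := by
    obtain ⟨hbc, hblast, hbhd, hbnil⟩ := G.bwd_ok (G.src (l.head hne))
    obtain ⟨hfc, hfhd, hflast, hfnil⟩ := G.fwd_ok (G.tgt (l.getLast hne))
    refine List.isChain_append.mpr ⟨hbc, ?_, ?_⟩
    · refine List.isChain_append.mpr ⟨hch, hfc, ?_⟩
      intro x hx y hy
      rw [List.getLast?_eq_getLast (l := l) hne, Option.mem_some_iff] at hx
      subst hx
      exact (hfhd y hy).symm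
    · intro x hx y hy
      rw [List.head?_append_of_ne_nil _ hne, List.head?_eq_head hne,
        Option.mem_some_iff] at hy
      subst hy
      exact hblast x hx
  source_start := by
    obtain ⟨hbc, hblast, hbhd, hbnil⟩ := G.bwd_ok (G.src (l.head hne))
    have main : ∀ c, (G.bwd (G.src (l.head hne)) ++ (l ++ G.fwd (G.tgt (l.getLast hne)))).head? =
        some c → G.IsSource (G.src c) := by
      intro c hc
      rcases hb : G.bwd (G.src (l.head hne)) with _ | ⟨x, rest⟩
      · rw [hb, List.nil_append, List.head?_append_of_ne_nil _ hne,
          List.head?_eq_head hne, Option.some_inj] at hc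
        rw [← hc]
        exact hbnil hb
      · rw [hb, List.cons_append, List.head?_cons, Option.some_inj] at hc
        rw [← hc]
        exact hbhd x (by rw [hb]; simp)
    exact main _ (List.head?_eq_head _)
  sink_end := by
    obtain ⟨hfc, hfhd, hflast, hfnil⟩ := G.fwd_ok (G.tgt (l.getLast hne))
    obtain ⟨hbc, hblast, hbhd, hbnil⟩ := G.bwd_ok (G.src (l.head hne))
    have main : ∀ c, (G.bwd (G.src (l.head hne)) ++ (l ++ G.fwd (G.tgt (l.getLast hne)))).getLast? =
        some c → G.IsSink (G.tgt c) := by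
      intro c hc
      rcases hf : G.fwd (G.tgt (l.getLast hne)) with _ | ⟨x, rest⟩
      · rw [hf, List.append_nil, List.getLast?_append_of_ne_nil _ hne,
          List.getLast?_eq_getLast (l := l) hne, Option.some_inj] at hc
        rw [← hc]
        exact hfnil hf
      · rw [hf, List.getLast?_append_of_ne_nil _ (by simp),
          List.getLast?_append_of_ne_nil _ (by simp)] at hc
        rw [← Option.mem_def] at hc
        rw [← hf] at hc
        exact hflast c hc
    exact main _ (List.getLast?_eq_getLast _)

lemma routeExtend_edges (l : List G.E) (hne : l ≠ [])
    (hch : l.Chain' (fun e f => G.tgt e = G.src f)) :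
    (G.routeExtend l hne hch).edges =
      G.bwd (G.src (l.head hne)) ++ (l ++ G.fwd (G.tgt (l.getLast hne))) := rfl

end DAG
namespace DAG

variable (G : DAG)

lemma exists_other_in (hfull : G.Full) {e : G.E} (hv : G.IsInner (G.tgt e)) :
    ∃ f : G.E, G.tgt f = G.tgt e ∧ f ≠ e ∧ ∀ g : G.E, G.tgt g = G.tgt e → g = e ∨ g = f := by
  have h2 : Nat.card {g : G.E // G.tgt g = G.tgt e} = 2 := by
    rw [Nat.card_eq_fintype_card]
    exact (hfull _ hv).1
  obtain ⟨⟨f, hf⟩, hfe, huniq⟩ :=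
    (Nat.card_eq_two_iff' (⟨e, rfl⟩ : {g : G.E // G.tgt g = G.tgt e})).mp h2
  refine ⟨f, hf, fun hh => hfe (Subtype.ext hh), fun g hg => ?_⟩
  by_cases hge : g = e
  · exact Or.inl hge
  · have := huniq ⟨g, hg⟩ (fun hh => hge (congrArg Subtype.val hh))
    exact Or.inr (congrArg Subtype.val this)

lemma exists_other_out (hfull : G.Full) {e : G.E} (hv : G.IsInner (G.src e)) :
    ∃ f : G.E, G.src f = G.src e ∧ f ≠ e ∧ ∀ g : G.E, G.src g = G.src e → g = e ∨ g = f := by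
  have h2 : Nat.card {g : G.E // G.src g = G.src e} = 2 := by
    rw [Nat.card_eq_fintype_card]
    exact (hfull _ hv).2
  obtain ⟨⟨f, hf⟩, hfe, huniq⟩ :=
    (Nat.card_eq_two_iff' (⟨e, rfl⟩ : {g : G.E // G.src g = G.src e})).mp h2
  refine ⟨f, hf, fun hh => hfe (Subtype.ext hh), fun g hg => ?_⟩
  by_cases hge : g = e
  · exact Or.inl hge
  · have := huniq ⟨g, hg⟩ (fun hh => hge (congrArg Subtype.val hh))
    exact Or.inr (congrArg Subtype.val this)

lemma minIn_or_maxIn (hfull : G.Full) (F : G.Framing) {e : G.E} (hv : G.IsInner (G.tgt e)) :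
    G.MinIn F e ∨ G.MaxIn F e := by
  obtain ⟨f, hft, hfe, hall⟩ := G.exists_other_in hfull hv
  rcases F.inlt_total e f hft.symm hv (Ne.symm hfe) with h | h
  · left
    intro g hg hge
    rcases hall g hg with rfl | rfl
    · exact absurd rfl hge
    · exact h
  · right
    intro g hg hge
    rcases hall g hg with rfl | rfl
    · exact absurd rfl hge
    · exact h

lemma minOut_or_maxOut (hfull : G.Full) (F : G.Framing) {e : G.E} (hv : G.IsInner (G.src e)) :
    G.MinOut F e ∨ G.MaxOut F e := by
  obtain ⟨f, hfs, hfe, hall⟩ := G.exists_other_out hfull hv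
  rcases F.outlt_total e f hfs.symm hv (Ne.symm hfe) with h | h
  · left
    intro g hg hge
    rcases hall g hg with rfl | rfl
    · exact absurd rfl hge
    · exact h
  · right
    intro g hg hge
    rcases hall g hg with rfl | rfl
    · exact absurd rfl hge
    · exact h

/-- The opposite framing: both orders reversed. -/
def Framing.op (F : G.Framing) : G.Framing where
  inlt e f := F.inlt f e
  outlt e f := F.outlt f e
  inlt_tgt h := (F.inlt_tgt h).symm
  inlt_inner h := F.inlt_tgt h ▸ F.inlt_inner h
  inlt_irrefl e h := F.inlt_irrefl e h
  inlt_trans h1 h2 := F.inlt_trans h2 h1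
  inlt_total e f h1 h2 h3 := (F.inlt_total e f h1 h2 h3).symm
  outlt_src h := (F.outlt_src h).symm
  outlt_inner h := F.outlt_src h ▸ F.outlt_inner h
  outlt_irrefl e h := F.outlt_irrefl e h
  outlt_trans h1 h2 := F.outlt_trans h2 h1
  outlt_total e f h1 h2 h3 := (F.outlt_total e f h1 h2 h3).symm

lemma inPathLt_op (F : G.Framing) {P Q : List G.E} (h : G.inPathLt (F.op) P Q) :
    G.inPathLt F Q P := by
  obtain ⟨p, q, s, e, f, hef, hP, hQ, hlt⟩ := h
  exact ⟨q, p, s, f, e, Ne.symm hef, hQ, hP, hlt⟩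

lemma outPathLt_op (F : G.Framing) {P Q : List G.E} (h : G.outPathLt (F.op) P Q) :
    G.outPathLt F Q P := by
  obtain ⟨s, p, q, e, f, hef, hP, hQ, hlt⟩ := h
  exact ⟨s, q, p, f, e, Ne.symm hef, hQ, hP, hlt⟩

lemma conflict_op (F : G.Framing) {P Q : G.Route} (h : G.Conflict (F.op) P Q) :
    G.Conflict F Q P := by
  obtain ⟨v, a, b, c, d, ea, ec, hP, hQ, hea, hec, hb, hd, hin, hout⟩ := h
  exact ⟨v, c, d, a, b, ec, ea, hQ, hP, hec, hea, hd, hb,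
    G.inPathLt_op F hin, G.outPathLt_op F hout⟩

lemma exceptional_op (F : G.Framing) {R : G.Route} (h : G.Exceptional F R) :
    G.Exceptional (F.op) R := by
  intro S
  exact ⟨fun hc => (h S).2 (G.conflict_op F hc), fun hc => (h S).1 (G.conflict_op F hc)⟩

lemma minIn_op (F : G.Framing) {e : G.E} (h : G.MaxIn F e) : G.MinIn (F.op) e := h

lemma minOut_op (F : G.Framing) {e : G.E} (h : G.MinOut F e) : G.MaxOut (F.op) e := h

end DAG
namespace DAG

variable (G : DAG)

lemma key (hfull : G.Full) (F : G.Framing) (R : G.Route) (hexc : G.Exceptional F R)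
    {A m B : List G.E} {e h : G.E}
    (hR : R.edges = A ++ e :: (m ++ h :: B))
    (hv : G.IsInner (G.tgt e)) (hw : G.IsInner (G.src h))
    (hmin : G.MinIn F e) (hmax : G.MaxOut F h) : False := by
  -- chain facts from R
  have hch : (A ++ ((e :: m) ++ (h :: B))).Chain' (fun x y => G.tgt x = G.src y) := by
    have := R.chain
    rw [hR] at this
    simpa using this
  obtain ⟨-, hch2⟩ := List.isChain_append.mp hch
  obtain ⟨hchEm, hchHB, hglue⟩ := List.isChain_append.mp hch2.1
  have hg : G.tgt ((e :: m).getLast (by simp)) = G.src h := by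
    refine hglue _ ?_ h (by simp)
    exact List.getLast?_eq_getLast _
  -- the other edges
  obtain ⟨f, hft, hfe, -⟩ := G.exists_other_in hfull hv
  obtain ⟨k, hks, hkh, -⟩ := G.exists_other_out hfull hw
  -- chain for the core of S
  have hchFm : (f :: m).Chain' (fun x y => G.tgt x = G.src y) := by
    rcases m with _ | ⟨y, m'⟩
    · exact List.isChain_singleton _
    · rw [List.isChain_cons_cons] at hchEm
      exact List.isChain_cons_cons.mpr ⟨hft.trans hchEm.1, hchEm.2⟩
  have hgf : G.tgt ((f :: m).getLast (by simp)) = G.src h := by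
    rcases m with _ | ⟨y, m'⟩
    · simpa [hft] using hg
    · rw [List.getLast_cons (l := y :: m') (by simp)]
      rw [List.getLast_cons (l := y :: m') (by simp)] at hg
      exact hg
  set l : List G.E := f :: (m ++ [k]) with hl
  have hlne : l ≠ [] := by simp [hl]
  have hchl : l.Chain' (fun x y => G.tgt x = G.src y) := by
    have : l = (f :: m) ++ [k] := by simp [hl]
    rw [this]
    refine List.isChain_append.mpr ⟨hchFm, List.isChain_singleton _, ?_⟩
    intro x hx y hy
    rw [List.getLast?_eq_getLast (l := f :: m) (by simp), Option.mem_some_iff] at hx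
    rw [List.head?_cons, Option.mem_some_iff] at hy
    subst hx; subst hy
    rw [hgf, hks]
  have hhead : l.head hlne = f := rfl
  have hlast : l.getLast hlne = k := by
    have h1 : l.getLast? = some k := by
      have : l = (f :: m) ++ [k] := by simp [hl]
      rw [this, List.getLast?_concat]
    rw [List.getLast?_eq_getLast (l := l) hlne, Option.some_inj] at h1
    exact h1
  set S := G.routeExtend l hlne hchl with hS
  have hSedges : S.edges = G.bwd (G.src f) ++ (l ++ G.fwd (G.tgt k)) := by
    rw [hS, G.routeExtend_edges, hhead, hlast]
  -- build the conflict
  have hconf : G.Conflict F R S := by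
    refine ⟨G.src h, A ++ (e :: m).dropLast, h :: B,
      G.bwd (G.src f) ++ (f :: m).dropLast, k :: G.fwd (G.tgt k),
      (e :: m).getLast (by simp), (f :: m).getLast (by simp), ?_, ?_, hg, hgf,
      by simp, by simp, ?_, ?_⟩
    · rw [hR]
      simp only [List.append_assoc]
      rw [← List.append_assoc ((e :: m).dropLast), List.dropLast_append_getLast]
      simp
    · rw [hSedges]
      have h2 : l ++ G.fwd (G.tgt k) = (f :: m) ++ (k :: G.fwd (G.tgt k)) := by
        simp [hl]
      rw [h2]
      simp only [List.append_assoc]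
      rw [← List.append_assoc ((f :: m).dropLast), List.dropLast_append_getLast]
    · refine ⟨A, G.bwd (G.src f), m, e, f, Ne.symm hfe, ?_, ?_, hmin f hft hfe⟩
      · rw [List.append_assoc, List.dropLast_append_getLast]
      · rw [List.append_assoc, List.dropLast_append_getLast]
    · exact ⟨[], G.fwd (G.tgt k), B, k, h, hkh, rfl, rfl, hmax k hks hkh⟩
  exact (hexc S).1 hconf

lemma key' (hfull : G.Full) (F : G.Framing) (R : G.Route) (hexc : G.Exceptional F R)
    {A m B : List G.E} {e h : G.E}
    (hR : R.edges = A ++ e :: (m ++ h :: B))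
    (hv : G.IsInner (G.tgt e)) (hw : G.IsInner (G.src h))
    (hmax : G.MaxIn F e) (hmin : G.MinOut F h) : False :=
  G.key hfull (F.op) R (G.exceptional_op F hexc) hR hv hw
    (G.minIn_op F hmax) (G.minOut_op F hmin)

end DAG
namespace DAG

variable (G : DAG)

lemma chain_adj (R : G.Route) {a b : List G.E} {e h : G.E}
    (hd : R.edges = a ++ e :: h :: b) : G.src h = G.tgt e := by
  have hch := R.chain
  rw [hd] at hch
  have := (List.isChain_append.mp hch).2.1
  exact (List.isChain_cons_cons.mp this).1.symm

lemma exists_succ (R : G.Route) {e : G.E} (he : e ∈ R.edges) (hv : G.IsInner (G.tgt e)) :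
    ∃ a h b, R.edges = a ++ e :: h :: b := by
  obtain ⟨a, t, ht⟩ := List.append_of_mem he
  rcases t with _ | ⟨h, b⟩
  · exfalso
    have h2 : R.edges.getLast? = some e := by rw [ht]; exact List.getLast?_concat (l := a)
    rw [List.getLast?_eq_getLast (l := R.edges) R.ne, Option.some_inj] at h2
    exact hv.2 (h2 ▸ R.sink_end)
  · exact ⟨a, h, b, ht⟩

lemma exists_pred (R : G.Route) {e : G.E} (he : e ∈ R.edges) (hv : G.IsInner (G.src e)) :
    ∃ a f b, R.edges = a ++ f :: e :: b := by
  obtain ⟨s, t, ht⟩ := List.append_of_mem he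
  rcases s.eq_nil_or_concat with rfl | ⟨s', f, rfl⟩
  · exfalso
    have h2 : R.edges.head? = some e := by rw [ht]; rfl
    rw [List.head?_eq_head R.ne, Option.some_inj] at h2
    exact hv.1 (h2 ▸ R.source_start)
  · exact ⟨s', f, t, by rw [ht]; simp⟩

lemma adj_min (hfull : G.Full) (F : G.Framing) (R : G.Route) (hexc : G.Exceptional F R)
    {a b : List G.E} {e h : G.E} (hd : R.edges = a ++ e :: h :: b)
    (hv : G.IsInner (G.tgt e)) (hmin : G.MinIn F e) : G.MinOut F h := by
  have hsh := G.chain_adj R hd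
  have hw : G.IsInner (G.src h) := hsh ▸ hv
  rcases G.minOut_or_maxOut hfull F hw with h1 | h1
  · exact h1
  · exact (G.key hfull F R hexc (A := a) (m := []) (B := b) (by rw [hd]; rfl) hv hw hmin h1).elim

lemma adj_max (hfull : G.Full) (F : G.Framing) (R : G.Route) (hexc : G.Exceptional F R)
    {a b : List G.E} {e h : G.E} (hd : R.edges = a ++ e :: h :: b)
    (hv : G.IsInner (G.tgt e)) (hmax : G.MaxIn F e) : G.MaxOut F h := by
  have hsh := G.chain_adj R hd
  have hw : G.IsInner (G.src h) := hsh ▸ hv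
  rcases G.minOut_or_maxOut hfull F hw with h1 | h1
  · exact (G.key' hfull F R hexc (A := a) (m := []) (B := b) (by rw [hd]; rfl) hv hw hmax h1).elim
  · exact h1

lemma append_cons_trichotomy {α : Type*} :
    ∀ (a₁ : List α) {a₂ b₁ b₂ : List α} {x y : α},
    a₁ ++ x :: b₁ = a₂ ++ y :: b₂ →
    (a₁ = a₂ ∧ x = y ∧ b₁ = b₂) ∨
    (∃ m, a₂ = a₁ ++ x :: m ∧ b₁ = m ++ y :: b₂) ∨
    (∃ m, a₁ = a₂ ++ y :: m ∧ b₂ = m ++ x :: b₁)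
  | [], a₂, b₁, b₂, x, y => by
    rcases a₂ with _ | ⟨z, a₂'⟩
    · intro hh
      simp only [List.nil_append] at hh
      obtain ⟨rfl, rfl⟩ := List.cons.inj hh
      exact Or.inl ⟨rfl, rfl, rfl⟩
    · intro hh
      simp only [List.nil_append, List.cons_append] at hh
      obtain ⟨rfl, rfl⟩ := List.cons.inj hh
      exact Or.inr (Or.inl ⟨a₂', by simp, rfl⟩)
  | z :: a₁', a₂, b₁, b₂, x, y => by
    rcases a₂ with _ | ⟨w, a₂'⟩
    · intro hh
      simp only [List.cons_append, List.nil_append] at hh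
      obtain ⟨rfl, rfl⟩ := List.cons.inj hh
      exact Or.inr (Or.inr ⟨a₁', by simp, rfl⟩)
    · intro hh
      simp only [List.cons_append] at hh
      obtain ⟨rfl, hh2⟩ := List.cons.inj hh
      rcases append_cons_trichotomy a₁' hh2 with ⟨rfl, rfl, rfl⟩ | ⟨m, rfl, rfl⟩ | ⟨m, rfl, rfl⟩
      · exact Or.inl ⟨rfl, rfl, rfl⟩
      · exact Or.inr (Or.inl ⟨m, rfl, rfl⟩)
      · exact Or.inr (Or.inr ⟨m, rfl, rfl⟩)

end DAG
/-- In a full DAG with ample framing, every exceptional route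
passes through all its inner vertices using smallest edges, or through all of
them using largest edges. -/
theorem exceptional_all_min_or_all_max (G : DAG) (F : G.Framing)
    (hfull : G.Full) (hample : G.Ample F)
    (R : G.Route) (hexc : G.Exceptional F R) :
    (∀ e ∈ R.edges, (G.IsInner (G.tgt e) → G.MinIn F e) ∧
        (G.IsInner (G.src e) → G.MinOut F e)) ∨
    (∀ e ∈ R.edges, (G.IsInner (G.tgt e) → G.MaxIn F e) ∧
        (G.IsInner (G.src e) → G.MaxOut F e)) := by
  by_cases H : ∀ (a : List G.E) (e h : G.E) (b : List G.E),
      R.edges = a ++ e :: h :: b → G.IsInner (G.tgt e) → G.MinIn F e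
  · left
    intro e he
    constructor
    · intro hv
      obtain ⟨a, h, b, hd⟩ := G.exists_succ R he hv
      exact H a e h b hd hv
    · intro hs
      obtain ⟨a, f, b, hd⟩ := G.exists_pred R he hs
      have hvf : G.IsInner (G.tgt f) := (G.chain_adj R hd) ▸ hs
      exact G.adj_min hfull F R hexc hd hvf (H a f e b hd hvf)
  · push_neg at H
    obtain ⟨a₀, e₀, h₀, b₀, hd₀, hv₀, hnm⟩ := H
    have hmax₀ : G.MaxIn F e₀ := (G.minIn_or_maxIn hfull F hv₀).resolve_left hnm
    have hmaxout₀ : G.MaxOut F h₀ := G.adj_max hfull F R hexc hd₀ hv₀ hmax₀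
    have hw₀ : G.IsInner (G.src h₀) := (G.chain_adj R hd₀) ▸ hv₀
    have maxAll : ∀ (a : List G.E) (e h : G.E) (b : List G.E),
        R.edges = a ++ e :: h :: b → G.IsInner (G.tgt e) → G.MaxIn F e := by
      intro a e h b hd hv
      by_contra hne
      have hmin : G.MinIn F e := (G.minIn_or_maxIn hfull F hv).resolve_right hne
      have hminout : G.MinOut F h := G.adj_min hfull F R hexc hd hv hmin
      have hw : G.IsInner (G.src h) := (G.chain_adj R hd) ▸ hv
      have heq : a ++ e :: (h :: b) = (a₀ ++ [e₀]) ++ h₀ :: b₀ := by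
        rw [← hd, hd₀]; simp
      rcases DAG.append_cons_trichotomy a heq with ⟨ha, heh, hb⟩ | ⟨m, hm1, hm2⟩ |
        ⟨m, hm1, hm2⟩
      · refine (G.key' hfull F R hexc (A := a₀) (m := [e]) (B := b)
          ?_ hv₀ hw hmax₀ hminout).elim
        rw [hd, ha]; simp
      · refine (G.key hfull F R hexc (A := a) (m := m) (B := b₀)
          ?_ hv hw₀ hmin hmaxout₀).elim
        rw [hd, hm2]
      · refine (G.key' hfull F R hexc (A := a₀) (m := h₀ :: (m ++ [e])) (B := b)
          ?_ hv₀ hw hmax₀ hminout).elim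
        rw [hd, hm1]; simp
    right
    intro e he
    constructor
    · intro hv
      obtain ⟨a, h, b, hd⟩ := G.exists_succ R he hv
      exact maxAll a e h b hd hv
    · intro hs
      obtain ⟨a, f, b, hd⟩ := G.exists_pred R he hs
      have hvf : G.IsInner (G.tgt f) := (G.chain_adj R hd) ▸ hs
      exact G.adj_max hfull F R hexc hd hvf (maxAll a f e b hd hvf)
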